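/- arXiv:1911.07481 — 6 statements merged into one kernel-verified Lean document; each statement's English description precedes it below -/
import Mathlib

section
/- Let a > 0 be a real number and define f : ℝ → ℝ by f(x) = (2^x − 1)² / ((2^x − 1)² + a²). Then f is concave on the interval [log₂(a + 1), ∞). (This is the precise form of the paper's Lemma 1, which asserts concavity of f(x) = 1/(1 + a²/(2^x − 1)²) for x ≥ log₂ a when a ≫ 1.) -/
/-- Lemma 1 (precise form): for `a > 0`, the function
`f(x) = (2^x − 1)² / ((2^x − 1)² + a²)` is concave on `[log₂(a + 1), ∞)`. -/
theorem stmt_0 (a : ℝ) (ha : 0 < a) :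
    ConcaveOn ℝ (Set.Ici (Real.logb 2 (a + 1)))
      (fun x : ℝ => ((2 : ℝ) ^ x - 1) ^ 2 / (((2 : ℝ) ^ x - 1) ^ 2 + a ^ 2)) := by
  have hL : 0 < Real.log 2 := Real.log_pos one_lt_two
  set L := Real.log 2 with hLdef
  -- derivative of 2^x
  have hu : ∀ x : ℝ, HasDerivAt (fun x : ℝ => (2 : ℝ) ^ x) ((2 : ℝ) ^ x * L) x :=
    fun x => (Real.hasStrictDerivAt_const_rpow two_pos x).hasDerivAt
  have hDpos : ∀ x : ℝ, 0 < ((2 : ℝ) ^ x - 1) ^ 2 + a ^ 2 := by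
    intro x
    positivity
  -- the first derivative
  set f1 : ℝ → ℝ := fun x =>
    2 * a ^ 2 * L * (((2 : ℝ) ^ x - 1) * (2 : ℝ) ^ x) / (((2 : ℝ) ^ x - 1) ^ 2 + a ^ 2) ^ 2
    with hf1def
  have hderiv1 : ∀ x : ℝ,
      HasDerivAt (fun x : ℝ => ((2 : ℝ) ^ x - 1) ^ 2 / (((2 : ℝ) ^ x - 1) ^ 2 + a ^ 2))
        (f1 x) x := by
    intro x
    have ht : HasDerivAt (fun x : ℝ => (2 : ℝ) ^ x - 1) ((2 : ℝ) ^ x * L) x :=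
      (hu x).sub_const 1
    have hN : HasDerivAt (fun x : ℝ => ((2 : ℝ) ^ x - 1) ^ 2)
        (2 * ((2 : ℝ) ^ x - 1) ^ 1 * ((2 : ℝ) ^ x * L)) x := by
      simpa using ht.fun_pow 2
    have hD : HasDerivAt (fun x : ℝ => ((2 : ℝ) ^ x - 1) ^ 2 + a ^ 2)
        (2 * ((2 : ℝ) ^ x - 1) ^ 1 * ((2 : ℝ) ^ x * L)) x := hN.add_const _
    have := hN.fun_div hD (ne_of_gt (hDpos x))
    refine this.congr_deriv ?_
    rw [hf1def]
    have hne : (((2 : ℝ) ^ x - 1) ^ 2 + a ^ 2) ^ 2 ≠ 0 := by positivity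
    field_simp
    ring
  -- the second derivative
  set f2 : ℝ → ℝ := fun x =>
    2 * a ^ 2 * L *
      ((((2 : ℝ) ^ x * L * (2 : ℝ) ^ x + ((2 : ℝ) ^ x - 1) * ((2 : ℝ) ^ x * L)) *
          (((2 : ℝ) ^ x - 1) ^ 2 + a ^ 2) ^ 2 -
        ((2 : ℝ) ^ x - 1) * (2 : ℝ) ^ x *
          (2 * ((((2 : ℝ) ^ x - 1) ^ 2 + a ^ 2)) ^ 1 *
            (2 * ((2 : ℝ) ^ x - 1) ^ 1 * ((2 : ℝ) ^ x * L)))) /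
        ((((2 : ℝ) ^ x - 1) ^ 2 + a ^ 2) ^ 2) ^ 2)
    with hf2def
  have hderiv2 : ∀ x : ℝ, HasDerivAt f1 (f2 x) x := by
    intro x
    have ht : HasDerivAt (fun x : ℝ => (2 : ℝ) ^ x - 1) ((2 : ℝ) ^ x * L) x :=
      (hu x).sub_const 1
    have hN : HasDerivAt (fun x : ℝ => ((2 : ℝ) ^ x - 1) * (2 : ℝ) ^ x)
        ((2 : ℝ) ^ x * L * (2 : ℝ) ^ x + ((2 : ℝ) ^ x - 1) * ((2 : ℝ) ^ x * L)) x :=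
      ht.mul (hu x)
    have hDD : HasDerivAt (fun x : ℝ => (((2 : ℝ) ^ x - 1) ^ 2 + a ^ 2) ^ 2)
        (2 * ((((2 : ℝ) ^ x - 1) ^ 2 + a ^ 2)) ^ 1 *
          (2 * ((2 : ℝ) ^ x - 1) ^ 1 * ((2 : ℝ) ^ x * L))) x := by
      have hD : HasDerivAt (fun x : ℝ => ((2 : ℝ) ^ x - 1) ^ 2 + a ^ 2)
          (2 * ((2 : ℝ) ^ x - 1) ^ 1 * ((2 : ℝ) ^ x * L)) x := by
        simpa using (ht.pow 2).add_const (a ^ 2)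
      simpa using hD.fun_pow 2
    have hne : ((((2 : ℝ) ^ x - 1) ^ 2 + a ^ 2)) ^ 2 ≠ 0 := by positivity
    have := ((hN.fun_div hDD hne).const_mul (2 * a ^ 2 * L))
    simpa [hf1def, hf2def, mul_div_assoc] using this
  -- nonpositivity of the second derivative on the interior
  have hmain : ∀ x : ℝ, Real.logb 2 (a + 1) < x → f2 x ≤ 0 := by
    intro x hx
    have hu_gt : a + 1 < (2 : ℝ) ^ x := by
      have h1 : (2 : ℝ) ^ Real.logb 2 (a + 1) = a + 1 :=
        Real.rpow_logb two_pos (by norm_num) (by linarith)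
      calc a + 1 = (2 : ℝ) ^ Real.logb 2 (a + 1) := h1.symm
        _ < (2 : ℝ) ^ x := (Real.rpow_lt_rpow_left_iff one_lt_two).mpr hx
    set t : ℝ := (2 : ℝ) ^ x - 1 with htdef
    set u : ℝ := (2 : ℝ) ^ x with hudef
    have hta : a ≤ t := by simp [htdef, hudef] at *; linarith
    have hut : u = t + 1 := by simp [htdef]
    have hupos : 0 < u := by nlinarith
    rw [hf2def]
    have hnum : (u * L * u + t * (u * L)) * (t ^ 2 + a ^ 2) ^ 2 -
        t * u * (2 * (t ^ 2 + a ^ 2) ^ 1 * (2 * t ^ 1 * (u * L))) ≤ 0 := by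
      have hE : (u + t) * (t ^ 2 + a ^ 2) - 4 * t ^ 2 * u ≤ 0 := by
        nlinarith [sq_nonneg t, sq_nonneg (t - a), mul_pos ha ha]
      have hDp : 0 < t ^ 2 + a ^ 2 := by positivity
      have : (u * L * u + t * (u * L)) * (t ^ 2 + a ^ 2) ^ 2 -
          t * u * (2 * (t ^ 2 + a ^ 2) ^ 1 * (2 * t ^ 1 * (u * L))) =
          L * u * (t ^ 2 + a ^ 2) * ((u + t) * (t ^ 2 + a ^ 2) - 4 * t ^ 2 * u) := by
        ring
      rw [this]
      have h1 : 0 < L * u * (t ^ 2 + a ^ 2) := by positivity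
      exact mul_nonpos_of_nonneg_of_nonpos h1.le hE
    have hc : 0 ≤ 2 * a ^ 2 * L := by positivity
    have hd : (0:ℝ) < ((t ^ 2 + a ^ 2) ^ 2) ^ 2 := by positivity
    exact mul_nonpos_of_nonneg_of_nonpos hc (div_nonpos_of_nonpos_of_nonneg hnum hd.le)
  -- assemble
  have hint : interior (Set.Ici (Real.logb 2 (a + 1))) = Set.Ioi (Real.logb 2 (a + 1)) :=
    interior_Ici
  refine concaveOn_of_hasDerivWithinAt2_nonpos (convex_Ici _)
    (fun x _ => ((hderiv1 x).continuousAt.continuousWithinAt))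
    (f' := f1) (f'' := f2)
    (fun x hx => (hderiv1 x).hasDerivWithinAt)
    (fun x hx => (hderiv2 x).hasDerivWithinAt)
    (fun x hx => hmain x (by rwa [hint, Set.mem_Ioi] at hx))
end

section
/- Let a > 0 be a real number, define f : ℝ → ℝ by f(x) = (2^x − 1)² / ((2^x − 1)² + a²), and define the cubic h_a : ℝ → ℝ by h_a(y) = 2y³ − 3y² − 2a²y + (a² + 1). Then for every real x, writing y = 2^x, the second derivative of f at x equals f''(x) = −2a²(ln 2)² · y · h_a(y) / (a² + (y − 1)²)³. -/
/-- For `a > 0`, `f(x) = (2^x − 1)² / ((2^x − 1)² + a²)` and the cubic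
`h_a(y) = 2y³ − 3y² − 2a²y + (a² + 1)`, writing `y = 2^x`, the second derivative satisfies
`f''(x) = −2a²(ln 2)² · y · h_a(y) / (a² + (y − 1)²)³`. -/
theorem stmt_2 (a : ℝ) (ha : 0 < a)
    (f : ℝ → ℝ)
    (hf : ∀ x, f x = ((2 : ℝ) ^ x - 1) ^ 2 / (((2 : ℝ) ^ x - 1) ^ 2 + a ^ 2))
    (h : ℝ → ℝ)
    (hh : ∀ y, h y = 2 * y ^ 3 - 3 * y ^ 2 - 2 * a ^ 2 * y + (a ^ 2 + 1)) :
    ∀ x : ℝ,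
      deriv (deriv f) x =
        -2 * a ^ 2 * (Real.log 2) ^ 2 * (2 : ℝ) ^ x * h ((2 : ℝ) ^ x) /
          (a ^ 2 + ((2 : ℝ) ^ x - 1) ^ 2) ^ 3 := by
  intro x
  set L : ℝ := Real.log 2 with hL
  have hDpos : ∀ t : ℝ, (0:ℝ) < ((2:ℝ)^t - 1)^2 + a^2 := fun t => by positivity
  have h2 : ∀ t : ℝ, HasDerivAt (fun s : ℝ => (2:ℝ)^s) ((2:ℝ)^t * L) t := fun t =>
    (Real.hasStrictDerivAt_const_rpow (by norm_num) t).hasDerivAt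
  have hu : ∀ t : ℝ, HasDerivAt (fun s : ℝ => ((2:ℝ)^s - 1)^2)
      (2 * ((2:ℝ)^t - 1) * ((2:ℝ)^t * L)) t := by
    intro t
    have := ((h2 t).sub_const 1).fun_pow 2
    simpa [mul_comm, mul_assoc, mul_left_comm] using this
  have hD : ∀ t : ℝ, HasDerivAt (fun s : ℝ => ((2:ℝ)^s - 1)^2 + a^2)
      (2 * ((2:ℝ)^t - 1) * ((2:ℝ)^t * L)) t := fun t => (hu t).add_const _
  -- first derivative
  have hf1 : ∀ t : ℝ, HasDerivAt f
      (2 * a^2 * L * ((2:ℝ)^t - 1) * (2:ℝ)^t / (((2:ℝ)^t - 1)^2 + a^2)^2) t := by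
    intro t
    have hdiv := (hu t).fun_div (hD t) (hDpos t).ne'
    have hfe : f = fun s : ℝ => ((2:ℝ)^s - 1)^2 / (((2:ℝ)^s - 1)^2 + a^2) := funext hf
    rw [hfe]
    refine hdiv.congr_deriv ?_
    have hD0 := (hDpos t).ne'
    field_simp
    ring
  have hderiv1 : deriv f = fun t : ℝ =>
      2 * a^2 * L * ((2:ℝ)^t - 1) * (2:ℝ)^t / (((2:ℝ)^t - 1)^2 + a^2)^2 :=
    funext fun t => (hf1 t).deriv
  rw [hderiv1]
  -- second derivative
  set y : ℝ := (2:ℝ)^x with hy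
  have hN : HasDerivAt (fun s : ℝ => 2 * a^2 * L * ((2:ℝ)^s - 1) * (2:ℝ)^s)
      (2 * a^2 * L * ((y * L) * y + (y - 1) * (y * L))) x := by
    have := (((h2 x).sub_const 1).mul (h2 x)).const_mul (2 * a^2 * L)
    simpa [mul_assoc] using this
  have hM : HasDerivAt (fun s : ℝ => (((2:ℝ)^s - 1)^2 + a^2)^2)
      (2 * (((y - 1)^2 + a^2)) * (2 * (y - 1) * (y * L))) x := by
    have := (hD x).fun_pow 2
    simpa [mul_comm, mul_assoc, mul_left_comm] using this
  have hM0 : (((2:ℝ)^x - 1)^2 + a^2)^2 ≠ 0 := pow_ne_zero _ (hDpos x).ne'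
  have h2nd := hN.fun_div hM hM0
  rw [h2nd.deriv, hh]
  have hD0 : ((y - 1)^2 + a^2) ≠ 0 := by rw [hy]; exact (hDpos x).ne'
  rw [show a^2 + ((2:ℝ)^x - 1)^2 = (y-1)^2 + a^2 by rw [hy]; ring]
  field_simp
  ring
end

section
/- Let a > 0 be a real number, define f : ℝ → ℝ by f(x) = (2^x − 1)² / ((2^x − 1)² + a²), and define the cubic h_a : ℝ → ℝ by h_a(y) = 2y³ − 3y² − 2a²y + (a² + 1). Then for every real x, the second derivative of f vanishes at x if and only if h_a(2^x) = 0; that is, (deriv (deriv f)) x = 0 ↔ h_a(2^x) = 0. -/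
open Real

private lemma hu (x : ℝ) : HasDerivAt (fun x : ℝ => (2:ℝ) ^ x) ((2:ℝ) ^ x * Real.log 2) x :=
  (Real.hasStrictDerivAt_const_rpow (by norm_num : (0:ℝ) < 2) x).hasDerivAt

/-- For `a > 0`, `f(x) = (2^x − 1)² / ((2^x − 1)² + a²)` and the cubic
`h_a(y) = 2y³ − 3y² − 2a²y + (a² + 1)`, the second derivative of `f` vanishes at `x`
iff `h_a(2^x) = 0`. -/
theorem stmt_3 (a : ℝ) (ha : 0 < a)
    (f : ℝ → ℝ)
    (hf : ∀ x, f x = ((2 : ℝ) ^ x - 1) ^ 2 / (((2 : ℝ) ^ x - 1) ^ 2 + a ^ 2))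
    (h : ℝ → ℝ)
    (hh : ∀ y, h y = 2 * y ^ 3 - 3 * y ^ 2 - 2 * a ^ 2 * y + (a ^ 2 + 1)) :
    ∀ x : ℝ, deriv (deriv f) x = 0 ↔ h ((2 : ℝ) ^ x) = 0 := by
  have ha2 : (0:ℝ) < a ^ 2 := by positivity
  have hD : ∀ x : ℝ, (0:ℝ) < ((2:ℝ) ^ x - 1) ^ 2 + a ^ 2 := fun x => by positivity
  have hfeq : f = fun x => ((2 : ℝ) ^ x - 1) ^ 2 / (((2 : ℝ) ^ x - 1) ^ 2 + a ^ 2) :=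
    funext hf
  set g : ℝ → ℝ := fun x =>
    2 * a ^ 2 * Real.log 2 * ((2:ℝ) ^ x * ((2:ℝ) ^ x - 1)) /
      (((2:ℝ) ^ x - 1) ^ 2 + a ^ 2) ^ 2 with hg
  -- first derivative
  have hderiv1 : ∀ x : ℝ, HasDerivAt f (g x) x := by
    intro x
    rw [hfeq]
    have hn : HasDerivAt (fun x : ℝ => ((2:ℝ) ^ x - 1) ^ 2)
        (2 * ((2:ℝ) ^ x - 1) * ((2:ℝ) ^ x * Real.log 2)) x := by
      have := ((hu x).sub_const 1).fun_pow 2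
      simpa using this
    have hd : HasDerivAt (fun x : ℝ => ((2:ℝ) ^ x - 1) ^ 2 + a ^ 2)
        (2 * ((2:ℝ) ^ x - 1) * ((2:ℝ) ^ x * Real.log 2)) x := hn.add_const _
    have := hn.fun_div hd (ne_of_gt (hD x))
    convert this using 1
    · rfl
    · rfl
    rw [hg]
    field_simp
    ring
  have hdf : deriv f = g := funext fun x => (hderiv1 x).deriv
  intro x
  -- second derivative
  have hn2 : HasDerivAt (fun x : ℝ => 2 * a ^ 2 * Real.log 2 * ((2:ℝ) ^ x * ((2:ℝ) ^ x - 1)))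
      (2 * a ^ 2 * Real.log 2 *
        ((2:ℝ) ^ x * Real.log 2 * ((2:ℝ) ^ x - 1) + (2:ℝ) ^ x * ((2:ℝ) ^ x * Real.log 2))) x :=
    ((hu x).mul ((hu x).sub_const 1)).const_mul _
  have hd2 : HasDerivAt (fun x : ℝ => (((2:ℝ) ^ x - 1) ^ 2 + a ^ 2) ^ 2)
      (2 * (((2:ℝ) ^ x - 1) ^ 2 + a ^ 2) *
        (2 * ((2:ℝ) ^ x - 1) * ((2:ℝ) ^ x * Real.log 2))) x := by
    have hd : HasDerivAt (fun x : ℝ => ((2:ℝ) ^ x - 1) ^ 2 + a ^ 2)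
        (2 * ((2:ℝ) ^ x - 1) * ((2:ℝ) ^ x * Real.log 2)) x := by
      have := ((hu x).sub_const 1).fun_pow 2
      simpa using this.add_const (a ^ 2)
    have := hd.fun_pow 2
    simpa [mul_assoc, mul_comm, mul_left_comm] using this
  have hg' : HasDerivAt g
      (-(2 * a ^ 2 * (Real.log 2) ^ 2 * (2:ℝ) ^ x * h ((2:ℝ) ^ x)) /
        (((2:ℝ) ^ x - 1) ^ 2 + a ^ 2) ^ 3) x := by
    have := hn2.fun_div hd2 (by positivity)
    convert this using 1
    · rfl
    · rfl
    rw [hh]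
    have hDx := (hD x).ne'
    field_simp
    ring
  have h2 : deriv (deriv f) x =
      -(2 * a ^ 2 * (Real.log 2) ^ 2 * (2:ℝ) ^ x * h ((2:ℝ) ^ x)) /
        (((2:ℝ) ^ x - 1) ^ 2 + a ^ 2) ^ 3 := by
    rw [hdf]; exact hg'.deriv
  rw [h2]
  have hlog : Real.log 2 ≠ 0 := ne_of_gt (Real.log_pos (by norm_num))
  have hux : (0:ℝ) < (2:ℝ) ^ x := Real.rpow_pos_of_pos (by norm_num) x
  rw [div_eq_zero_iff]
  constructor
  · rintro (h1 | h1)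
    · have hne : (2 * a ^ 2 * (Real.log 2) ^ 2 * (2:ℝ) ^ x) ≠ 0 := by positivity
      exact (mul_eq_zero.mp (neg_eq_zero.mp h1)).resolve_left hne
    · exact absurd h1 (by positivity)
  · intro h1
    left
    rw [h1]; ring
end

section
/- Let a ≥ 1 be a real number and define the cubic h_a : ℝ → ℝ by h_a(y) = 2y³ − 3y² − 2a²y + (a² + 1). Then h_a has exactly three real roots y₂ < y₃ < y₁, and they satisfy y₂ ∈ (−a, −a + 1), y₃ ∈ (0, 1), and y₁ ∈ (a, a + 1). (This makes precise the approximate root locations y₁ ≈ a, y₂ ≈ −a, y₃ ≈ 0 used in the proof of Lemma 1.) -/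
/-- For `a ≥ 1`, the cubic `h_a(y) = 2y³ − 3y² − 2a²y + (a² + 1)` has exactly three real
roots `y₂ < y₃ < y₁`, with `y₂ ∈ (−a, −a+1)`, `y₃ ∈ (0, 1)` and `y₁ ∈ (a, a+1)`. -/
theorem stmt_4 (a : ℝ) (ha : 1 ≤ a)
    (h : ℝ → ℝ)
    (hh : ∀ y, h y = 2 * y ^ 3 - 3 * y ^ 2 - 2 * a ^ 2 * y + (a ^ 2 + 1)) :
    ∃ y₁ y₂ y₃ : ℝ,
      y₂ < y₃ ∧ y₃ < y₁ ∧
      h y₁ = 0 ∧ h y₂ = 0 ∧ h y₃ = 0 ∧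
      (∀ y : ℝ, h y = 0 → y = y₁ ∨ y = y₂ ∨ y = y₃) ∧
      y₂ ∈ Set.Ioo (-a) (-a + 1) ∧
      y₃ ∈ Set.Ioo (0 : ℝ) 1 ∧
      y₁ ∈ Set.Ioo a (a + 1) := by
  have hcont : Continuous h := by
    have : h = fun y => 2 * y ^ 3 - 3 * y ^ 2 - 2 * a ^ 2 * y + (a ^ 2 + 1) := funext hh
    rw [this]; continuity
  have ha2 : (1 : ℝ) ≤ a ^ 2 := by nlinarith
  -- sign values
  have v1 : h (-a) < 0 := by rw [hh]; nlinarith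
  have v2 : 0 < h (-a + 1) := by rw [hh]; nlinarith
  have v3 : 0 < h 0 := by rw [hh]; nlinarith
  have v4 : h 1 < 0 := by rw [hh]; nlinarith
  have v5 : h a < 0 := by rw [hh]; nlinarith
  have v6 : 0 < h (a + 1) := by rw [hh]; nlinarith
  obtain ⟨y₂, hy₂mem, hy₂⟩ := intermediate_value_Ioo (by linarith : -a ≤ -a + 1)
    hcont.continuousOn (Set.mem_Ioo.mpr ⟨v1, v2⟩)
  obtain ⟨y₃, hy₃mem, hy₃⟩ := intermediate_value_Ioo' (by linarith : (0:ℝ) ≤ 1)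
    hcont.continuousOn (Set.mem_Ioo.mpr ⟨v4, v3⟩)
  obtain ⟨y₁, hy₁mem, hy₁⟩ := intermediate_value_Ioo (by linarith : a ≤ a + 1)
    hcont.continuousOn (Set.mem_Ioo.mpr ⟨v5, v6⟩)
  obtain ⟨h2l, h2r⟩ := hy₂mem
  obtain ⟨h3l, h3r⟩ := hy₃mem
  obtain ⟨h1l, h1r⟩ := hy₁mem
  have lt23 : y₂ < y₃ := by linarith
  have lt31 : y₃ < y₁ := by linarith
  refine ⟨y₁, y₂, y₃, lt23, lt31, hy₁, hy₂, hy₃, ?_, ⟨h2l, h2r⟩, ⟨h3l, h3r⟩, ⟨h1l, h1r⟩⟩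
  -- uniqueness
  have E1 : 2 * y₁ ^ 3 - 3 * y₁ ^ 2 - 2 * a ^ 2 * y₁ + (a ^ 2 + 1) = 0 := by
    rw [← hh]; exact hy₁
  have E2 : 2 * y₂ ^ 3 - 3 * y₂ ^ 2 - 2 * a ^ 2 * y₂ + (a ^ 2 + 1) = 0 := by
    rw [← hh]; exact hy₂
  have E3 : 2 * y₃ ^ 3 - 3 * y₃ ^ 2 - 2 * a ^ 2 * y₃ + (a ^ 2 + 1) = 0 := by
    rw [← hh]; exact hy₃
  have ne12 : y₁ - y₂ ≠ 0 := sub_ne_zero.mpr (by linarith)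
  have ne13 : y₁ - y₃ ≠ 0 := sub_ne_zero.mpr (by linarith)
  have ne23 : y₂ - y₃ ≠ 0 := sub_ne_zero.mpr (by linarith)
  have A12 : 2 * (y₁ ^ 2 + y₁ * y₂ + y₂ ^ 2) - 3 * (y₁ + y₂) - 2 * a ^ 2 = 0 := by
    have hfac : (y₁ - y₂) * (2 * (y₁ ^ 2 + y₁ * y₂ + y₂ ^ 2) - 3 * (y₁ + y₂) - 2 * a ^ 2) = 0 := by
      linear_combination E1 - E2
    rcases mul_eq_zero.mp hfac with h' | h'
    · exact absurd h' ne12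
    · exact h'
  have A13 : 2 * (y₁ ^ 2 + y₁ * y₃ + y₃ ^ 2) - 3 * (y₁ + y₃) - 2 * a ^ 2 = 0 := by
    have hfac : (y₁ - y₃) * (2 * (y₁ ^ 2 + y₁ * y₃ + y₃ ^ 2) - 3 * (y₁ + y₃) - 2 * a ^ 2) = 0 := by
      linear_combination E1 - E3
    rcases mul_eq_zero.mp hfac with h' | h'
    · exact absurd h' ne13
    · exact h'
  have hs : y₁ + y₂ + y₃ = 3 / 2 := by
    have hfac : (y₂ - y₃) * (2 * (y₁ + y₂ + y₃) - 3) = 0 := by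
      linear_combination A12 - A13
    rcases mul_eq_zero.mp hfac with h' | h'
    · exact absurd h' ne23
    · linarith
  have hp : y₁ * y₂ + y₁ * y₃ + y₂ * y₃ = -a ^ 2 := by
    linear_combination (-1/2 : ℝ) * A12 + (y₁ + y₂) * hs
  have hq : y₁ * y₂ * y₃ = -(a ^ 2 + 1) / 2 := by
    linear_combination y₁ * hp - y₁ ^ 2 * hs + (1/2 : ℝ) * E1
  intro y hy
  have Ey : 2 * y ^ 3 - 3 * y ^ 2 - 2 * a ^ 2 * y + (a ^ 2 + 1) = 0 := by
    rw [← hh]; exact hy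
  have hfac : (y - y₁) * ((y - y₂) * (y - y₃)) = 0 := by
    linear_combination (1/2 : ℝ) * Ey - y ^ 2 * hs + y * hp - hq
  rcases mul_eq_zero.mp hfac with h' | h'
  · exact Or.inl (sub_eq_zero.mp h')
  · rcases mul_eq_zero.mp h' with h'' | h''
    · exact Or.inr (Or.inl (sub_eq_zero.mp h''))
    · exact Or.inr (Or.inr (sub_eq_zero.mp h''))
end

section
/- Let σ > 0 and W > 0 be real numbers, and define the function F : ℝ → ℝ by F(b) = 1 / (σ² + W²/(2^b − 1)²). Then F is concave on the interval [log₂(W/σ + 1), ∞). -/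
private lemma hasDerivAt_t (b : ℝ) :
    HasDerivAt (fun x : ℝ => (2:ℝ) ^ x - 1) ((2:ℝ) ^ b * Real.log 2) b :=
  ((Real.hasStrictDerivAt_const_rpow two_pos b).hasDerivAt).sub_const 1

private lemma hasDerivAt_G (σ W b : ℝ) (hD : 0 < σ ^ 2 * ((2:ℝ) ^ b - 1) ^ 2 + W ^ 2) :
    HasDerivAt (fun x : ℝ => ((2:ℝ) ^ x - 1) ^ 2 / (σ ^ 2 * ((2:ℝ) ^ x - 1) ^ 2 + W ^ 2))
      (2 * Real.log 2 * W ^ 2 * ((2:ℝ) ^ b * ((2:ℝ) ^ b - 1)) /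
        (σ ^ 2 * ((2:ℝ) ^ b - 1) ^ 2 + W ^ 2) ^ 2) b := by
  have ht := hasDerivAt_t b
  have hN := ht.pow 2
  have hDd : HasDerivAt (fun x : ℝ => σ ^ 2 * ((2:ℝ) ^ x - 1) ^ 2 + W ^ 2)
      (σ ^ 2 * ((2 : ℕ) * ((2:ℝ) ^ b - 1) ^ (2 - 1) * ((2:ℝ) ^ b * Real.log 2))) b :=
    ((ht.pow 2).const_mul _).add_const _
  have h := hN.div hDd (ne_of_gt hD)
  refine h.congr_deriv ?_
  simp only [Pi.pow_apply]
  field_simp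
  ring

private lemma hasDerivAt_G1 (σ W b : ℝ) (hD : 0 < σ ^ 2 * ((2:ℝ) ^ b - 1) ^ 2 + W ^ 2) :
    HasDerivAt (fun x : ℝ => 2 * Real.log 2 * W ^ 2 * ((2:ℝ) ^ x * ((2:ℝ) ^ x - 1)) /
        (σ ^ 2 * ((2:ℝ) ^ x - 1) ^ 2 + W ^ 2) ^ 2)
      (2 * (Real.log 2) ^ 2 * W ^ 2 * (2:ℝ) ^ b *
        ((2 * ((2:ℝ) ^ b - 1) + 1) * (σ ^ 2 * ((2:ℝ) ^ b - 1) ^ 2 + W ^ 2) -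
          4 * σ ^ 2 * (2:ℝ) ^ b * ((2:ℝ) ^ b - 1) ^ 2) /
        (σ ^ 2 * ((2:ℝ) ^ b - 1) ^ 2 + W ^ 2) ^ 3) b := by
  have he := (Real.hasStrictDerivAt_const_rpow two_pos b).hasDerivAt
  have ht := hasDerivAt_t b
  have hn : HasDerivAt (fun x : ℝ => (2:ℝ) ^ x * ((2:ℝ) ^ x - 1))
      ((2:ℝ) ^ b * Real.log 2 * ((2:ℝ) ^ b - 1) + (2:ℝ) ^ b * ((2:ℝ) ^ b * Real.log 2)) b :=
    he.mul ht
  have hN : HasDerivAt (fun x : ℝ => 2 * Real.log 2 * W ^ 2 * ((2:ℝ) ^ x * ((2:ℝ) ^ x - 1)))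
      (2 * Real.log 2 * W ^ 2 *
        ((2:ℝ) ^ b * Real.log 2 * ((2:ℝ) ^ b - 1) + (2:ℝ) ^ b * ((2:ℝ) ^ b * Real.log 2))) b :=
    hn.const_mul _
  have hDd : HasDerivAt (fun x : ℝ => σ ^ 2 * ((2:ℝ) ^ x - 1) ^ 2 + W ^ 2)
      (σ ^ 2 * ((2 : ℕ) * ((2:ℝ) ^ b - 1) ^ (2 - 1) * ((2:ℝ) ^ b * Real.log 2))) b :=
    ((ht.pow 2).const_mul _).add_const _
  have hD2 := hDd.pow 2
  have h := hN.div hD2 (pow_ne_zero 2 (ne_of_gt hD))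
  refine h.congr_deriv ?_
  simp only [Pi.pow_apply]
  rw [div_eq_div_iff (pow_ne_zero 2 (pow_ne_zero 2 hD.ne')) (pow_ne_zero 3 hD.ne')]
  push_cast
  ring

/-- For `σ > 0` and `W > 0`, the Fisher-information weight
`F(b) = 1 / (σ² + W²/(2^b − 1)²)` is concave on `[log₂(W/σ + 1), ∞)`. -/
theorem stmt_5 (σ W : ℝ) (hσ : 0 < σ) (hW : 0 < W) :
    ConcaveOn ℝ (Set.Ici (Real.logb 2 (W / σ + 1)))
      (fun b : ℝ => 1 / (σ ^ 2 + W ^ 2 / ((2 : ℝ) ^ b - 1) ^ 2)) := by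
  set L : ℝ := Real.logb 2 (W / σ + 1) with hL
  have haux : (0:ℝ) < W / σ + 1 := by positivity
  have h2L : (2:ℝ) ^ L = W / σ + 1 :=
    Real.rpow_logb (by norm_num) (by norm_num) haux
  have hDpos : ∀ b : ℝ, 0 < σ ^ 2 * ((2:ℝ) ^ b - 1) ^ 2 + W ^ 2 := by
    intro b; positivity
  -- On Ici L, 2^b - 1 ≥ W/σ > 0
  have ht_ge : ∀ b ∈ Set.Ici L, W / σ ≤ (2:ℝ) ^ b - 1 := by
    intro b hb
    have : (2:ℝ) ^ L ≤ (2:ℝ) ^ b :=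
      (Real.rpow_le_rpow_left_iff one_lt_two).mpr hb
    rw [h2L] at this; linarith
  have ht_gt : ∀ b ∈ interior (Set.Ici L), W / σ < (2:ℝ) ^ b - 1 := by
    intro b hb
    rw [interior_Ici] at hb
    have : (2:ℝ) ^ L < (2:ℝ) ^ b :=
      (Real.rpow_lt_rpow_left_iff one_lt_two).mpr hb
    rw [h2L] at this; linarith
  have hG : ConcaveOn ℝ (Set.Ici L)
      (fun x : ℝ => ((2:ℝ) ^ x - 1) ^ 2 / (σ ^ 2 * ((2:ℝ) ^ x - 1) ^ 2 + W ^ 2)) := by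
    apply concaveOn_of_hasDerivWithinAt2_nonpos (convex_Ici L)
      (f' := fun x : ℝ => 2 * Real.log 2 * W ^ 2 * ((2:ℝ) ^ x * ((2:ℝ) ^ x - 1)) /
        (σ ^ 2 * ((2:ℝ) ^ x - 1) ^ 2 + W ^ 2) ^ 2)
      (f'' := fun x : ℝ => 2 * (Real.log 2) ^ 2 * W ^ 2 * (2:ℝ) ^ x *
        ((2 * ((2:ℝ) ^ x - 1) + 1) * (σ ^ 2 * ((2:ℝ) ^ x - 1) ^ 2 + W ^ 2) -
          4 * σ ^ 2 * (2:ℝ) ^ x * ((2:ℝ) ^ x - 1) ^ 2) /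
        (σ ^ 2 * ((2:ℝ) ^ x - 1) ^ 2 + W ^ 2) ^ 3)
    · exact fun x _ => (hasDerivAt_G σ W x (hDpos x)).continuousAt.continuousWithinAt
    · exact fun x _ => (hasDerivAt_G σ W x (hDpos x)).hasDerivWithinAt
    · exact fun x _ => (hasDerivAt_G1 σ W x (hDpos x)).hasDerivWithinAt
    · intro x hx
      have htx := ht_gt x hx
      set t : ℝ := (2:ℝ) ^ x - 1 with hT
      have hWt : W < σ * t := by
        have := (div_lt_iff₀ hσ).mp htx
        linarith [this]
      have ht0 : 0 < t := lt_trans (by positivity) htx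
      have hB : (2 * t + 1) * (σ ^ 2 * t ^ 2 + W ^ 2) - 4 * σ ^ 2 * (t + 1) * t ^ 2 ≤ 0 := by
        nlinarith [sq_nonneg (σ * t - W), sq_nonneg t, mul_pos ht0 ht0,
          mul_lt_mul_of_pos_right hWt hW, mul_lt_mul_of_pos_right hWt ht0]
      have hex : (2:ℝ) ^ x = t + 1 := by rw [hT]; ring
      rw [hex]
      apply div_nonpos_of_nonpos_of_nonneg
      · apply mul_nonpos_of_nonneg_of_nonpos
        · positivity
        · exact hB
      · positivity
  refine hG.congr fun b hb => ?_
  have htb : 0 < (2:ℝ) ^ b - 1 := lt_of_lt_of_le (by positivity) (ht_ge b hb)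
  have hne : ((2:ℝ) ^ b - 1) ≠ 0 := ne_of_gt htb
  field_simp
end

section
/- Let E be a real vector space, S ⊆ E a convex set, n a natural number, and g : E → Matrix (Fin n) (Fin n) ℝ a map such that g(x) is symmetric and positive definite for every x ∈ S, and g is matrix-concave on S with respect to the Loewner order: for all x, y ∈ S and all t ∈ [0, 1], g(t·x + (1 − t)·y) − (t·g(x) + (1 − t)·g(y)) is positive semidefinite. Then the function x ↦ trace((g x)⁻¹) is convex on S. -/
open Matrix

private lemma symm_dot {n : ℕ} {A : Matrix (Fin n) (Fin n) ℝ} (hAs : A.IsSymm)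
    (a b : Fin n → ℝ) : a ⬝ᵥ (A *ᵥ b) = b ⬝ᵥ (A *ᵥ a) := by
  rw [Matrix.dotProduct_mulVec, ← Matrix.mulVec_transpose, hAs.eq, dotProduct_comm]

private lemma psd_nonneg {n : ℕ} {A : Matrix (Fin n) (Fin n) ℝ} (h : A.PosSemidef)
    (w : Fin n → ℝ) : 0 ≤ w ⬝ᵥ (A *ᵥ w) := by
  simpa using h.dotProduct_mulVec_nonneg w

private lemma key_le {n : ℕ} {A : Matrix (Fin n) (Fin n) ℝ} (hA : A.PosDef)
    (hAs : A.IsSymm) (v w : Fin n → ℝ) :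
    2 * (w ⬝ᵥ v) - w ⬝ᵥ (A *ᵥ w) ≤ v ⬝ᵥ (A⁻¹ *ᵥ v) := by
  set u : Fin n → ℝ := A⁻¹ *ᵥ v with hu
  have hAu : A *ᵥ u = v := by
    rw [hu, Matrix.mulVec_mulVec, Matrix.mul_nonsing_inv _ (isUnit_iff_ne_zero.2 hA.det_pos.ne'), Matrix.one_mulVec]
  have hexp : (w - u) ⬝ᵥ (A *ᵥ (w - u))
      = w ⬝ᵥ (A *ᵥ w) - 2 * (w ⬝ᵥ v) + v ⬝ᵥ u := by
    have h1 : u ⬝ᵥ (A *ᵥ w) = w ⬝ᵥ (A *ᵥ u) := symm_dot hAs u w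
    have h2 : w ⬝ᵥ (A *ᵥ u) = w ⬝ᵥ v := by rw [hAu]
    have h3 : u ⬝ᵥ (A *ᵥ u) = v ⬝ᵥ u := by rw [hAu]; exact dotProduct_comm u v ▸ rfl
    simp only [Matrix.mulVec_sub, dotProduct_sub, sub_dotProduct]
    rw [h1, h2, h3]
    ring
  have hnn : 0 ≤ (w - u) ⬝ᵥ (A *ᵥ (w - u)) := psd_nonneg hA.posSemidef _
  rw [hexp] at hnn
  linarith

private lemma key_eq {n : ℕ} {A : Matrix (Fin n) (Fin n) ℝ} (hA : A.PosDef)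
    (v : Fin n → ℝ) :
    2 * ((A⁻¹ *ᵥ v) ⬝ᵥ v) - (A⁻¹ *ᵥ v) ⬝ᵥ (A *ᵥ (A⁻¹ *ᵥ v)) = v ⬝ᵥ (A⁻¹ *ᵥ v) := by
  set w : Fin n → ℝ := A⁻¹ *ᵥ v with hw
  have hAw : A *ᵥ w = v := by
    rw [hw, Matrix.mulVec_mulVec, Matrix.mul_nonsing_inv _ (isUnit_iff_ne_zero.2 hA.det_pos.ne'), Matrix.one_mulVec]
  rw [hAw, dotProduct_comm w v]
  ring

private lemma diag_inv {n : ℕ} (A : Matrix (Fin n) (Fin n) ℝ) (i : Fin n) :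
    (Pi.single i 1 : Fin n → ℝ) ⬝ᵥ (A⁻¹ *ᵥ Pi.single i 1) = A⁻¹ i i := by
  simp [Matrix.mulVec_single, dotProduct, Pi.single_apply]

/-- If `g` is a matrix-concave map (w.r.t. the Loewner order) on a convex set `S` whose
values on `S` are symmetric positive definite matrices, then `x ↦ trace((g x)⁻¹)` is
convex on `S`. -/
theorem stmt_13 {E : Type*} [AddCommGroup E] [Module ℝ E]
    (S : Set E) (hS : Convex ℝ S) (n : ℕ)
    (g : E → Matrix (Fin n) (Fin n) ℝ)
    (hsymm : ∀ x ∈ S, (g x).IsSymm)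
    (hpd : ∀ x ∈ S, (g x).PosDef)
    (hconc : ∀ x ∈ S, ∀ y ∈ S, ∀ t : ℝ, t ∈ Set.Icc (0 : ℝ) 1 →
      (g (t • x + (1 - t) • y) - (t • g x + (1 - t) • g y)).PosSemidef) :
    ConvexOn ℝ S (fun x => ((g x)⁻¹).trace) := by
  refine ⟨hS, ?_⟩
  intro x hx y hy a b ha hb hab
  have hb' : b = 1 - a := by linarith
  set z := a • x + b • y with hz
  have hzS : z ∈ S := hS hx hy ha hb hab
  have hpsd : (g z - (a • g x + b • g y)).PosSemidef := by
    have := hconc x hx y hy a ⟨ha, by linarith⟩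
    rw [hb']
    simpa [hz, hb'] using this
  simp only [Matrix.trace, Matrix.diag]
  rw [Finset.smul_sum, Finset.smul_sum, ← Finset.sum_add_distrib]
  apply Finset.sum_le_sum
  intro i _
  set v : Fin n → ℝ := Pi.single i 1 with hv
  set w : Fin n → ℝ := (g z)⁻¹ *ᵥ v with hw
  have h1 : (g z)⁻¹ i i = 2 * (w ⬝ᵥ v) - w ⬝ᵥ (g z *ᵥ w) := by
    rw [← diag_inv (g z) i, hw, hv, key_eq (hpd z hzS)]
  have h2 : 0 ≤ w ⬝ᵥ ((g z - (a • g x + b • g y)) *ᵥ w) := psd_nonneg hpsd w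
  have h3 : w ⬝ᵥ ((g z - (a • g x + b • g y)) *ᵥ w)
      = w ⬝ᵥ (g z *ᵥ w) - (a * (w ⬝ᵥ (g x *ᵥ w)) + b * (w ⬝ᵥ (g y *ᵥ w))) := by
    simp only [Matrix.sub_mulVec, Matrix.add_mulVec, Matrix.smul_mulVec,
      dotProduct_sub, dotProduct_add, dotProduct_smul, smul_eq_mul]
  have h4 : 2 * (w ⬝ᵥ v) - w ⬝ᵥ (g x *ᵥ w) ≤ v ⬝ᵥ ((g x)⁻¹ *ᵥ v) := by
    have := key_le (hpd x hx) (hsymm x hx) v w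
    linarith [this]
  have h5 : 2 * (w ⬝ᵥ v) - w ⬝ᵥ (g y *ᵥ w) ≤ v ⬝ᵥ ((g y)⁻¹ *ᵥ v) := by
    exact key_le (hpd y hy) (hsymm y hy) v w
  have hx' : v ⬝ᵥ ((g x)⁻¹ *ᵥ v) = (g x)⁻¹ i i := diag_inv (g x) i
  have hy' : v ⬝ᵥ ((g y)⁻¹ *ᵥ v) = (g y)⁻¹ i i := diag_inv (g y) i
  rw [hx'] at h4
  rw [hy'] at h5
  rw [h3] at h2
  simp only [smul_eq_mul]
  have h4' := mul_le_mul_of_nonneg_left h4 ha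
  have h5' := mul_le_mul_of_nonneg_left h5 hb
  have hcomb : a * (2 * (w ⬝ᵥ v) - w ⬝ᵥ (g x *ᵥ w)) + b * (2 * (w ⬝ᵥ v) - w ⬝ᵥ (g y *ᵥ w))
      = (a + b) * (2 * (w ⬝ᵥ v)) - (a * (w ⬝ᵥ (g x *ᵥ w)) + b * (w ⬝ᵥ (g y *ᵥ w))) := by
    ring
  rw [hab, one_mul] at hcomb
  linarith
end
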